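/- For every positive integer n, the average number of divisors satisfies the two-sided estimate H_n − 1 < (d(1) + d(2) + … + d(n))/n ≤ H_n, where H_n = 1 + 1/2 + 1/3 + … + 1/n is the n-th harmonic number. -/

import Mathlib

open Finset

lemma divisor_sum_eq (n : ℕ) :
    ∑ k ∈ Finset.Icc 1 n, (Nat.divisors k).card = ∑ j ∈ Finset.Icc 1 n, n / j := by
  have h1 : ∀ k ∈ Finset.Icc 1 n, (Nat.divisors k).card
      = ∑ j ∈ Finset.Icc 1 n, if j ∣ k then 1 else 0 := by
    intro k hk
    simp only [Finset.mem_Icc] at hk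
    rw [← Finset.card_filter]
    congr 1
    ext j
    simp only [Nat.mem_divisors, Finset.mem_filter, Finset.mem_Icc]
    constructor
    · intro ⟨hd, hk0⟩
      exact ⟨⟨Nat.one_le_iff_ne_zero.mpr (by rintro rfl; simp at hd; omega),
        le_trans (Nat.le_of_dvd (by omega) hd) hk.2⟩, hd⟩
    · intro ⟨⟨h1, _⟩, hd⟩
      exact ⟨hd, by omega⟩
  rw [Finset.sum_congr rfl h1, Finset.sum_comm]
  apply Finset.sum_congr rfl
  intro j hj
  rw [← Finset.card_filter]
  have := Nat.Ioc_filter_dvd_card_eq_div n j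
  rw [← this, ← Finset.Icc_add_one_left_eq_Ioc, zero_add]

theorem avg_divisor_two_sided (n : ℕ) (hn : 0 < n) :
    (∑ k ∈ Finset.Icc 1 n, (1 : ℝ) / k) - 1 <
      (∑ k ∈ Finset.Icc 1 n, ((Nat.divisors k).card : ℝ)) / n ∧
    (∑ k ∈ Finset.Icc 1 n, ((Nat.divisors k).card : ℝ)) / n ≤
      ∑ k ∈ Finset.Icc 1 n, (1 : ℝ) / k := by
  have hn' : (0:ℝ) < n := by exact_mod_cast hn
  have key : (∑ k ∈ Finset.Icc 1 n, ((Nat.divisors k).card : ℝ))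
      = ∑ j ∈ Finset.Icc 1 n, ((n / j : ℕ) : ℝ) := by
    rw [← Nat.cast_sum, ← Nat.cast_sum, divisor_sum_eq]
  constructor
  · rw [key, lt_div_iff₀ hn', sub_mul, one_mul, Finset.sum_mul]
    have step : ∀ j ∈ Finset.Icc 1 n, (1:ℝ)/j * n - 1 < ((n / j : ℕ) : ℝ) := by
      intro j hj
      simp only [Finset.mem_Icc] at hj
      have hj' : (0:ℝ) < j := by exact_mod_cast hj.1
      rw [sub_lt_iff_lt_add, one_div, inv_mul_eq_div, div_lt_iff₀ hj', add_mul, one_mul]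
      have h := (Nat.div_lt_iff_lt_mul (show 0 < j by omega)).mp (Nat.lt_succ_self (n / j))
      calc (n:ℝ) < ((n / j + 1) * j : ℕ) := by exact_mod_cast h
        _ = ((n/j : ℕ):ℝ) * j + j := by push_cast; ring
    have hcard : ((Finset.Icc 1 n).card : ℝ) = n := by simp
    calc (∑ j ∈ Finset.Icc 1 n, (1:ℝ)/j * n) - n
        = ∑ j ∈ Finset.Icc 1 n, ((1:ℝ)/j * n - 1) := by
          rw [Finset.sum_sub_distrib, Finset.sum_const, nsmul_eq_mul, mul_one, hcard]
      _ < ∑ j ∈ Finset.Icc 1 n, ((n / j : ℕ) : ℝ) :=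
          Finset.sum_lt_sum_of_nonempty (Finset.nonempty_Icc.mpr hn) step
  · rw [key, div_le_iff₀ hn', Finset.sum_mul]
    apply Finset.sum_le_sum
    intro j hj
    simp only [Finset.mem_Icc] at hj
    have hj' : (0:ℝ) < j := by exact_mod_cast hj.1
    rw [one_div, inv_mul_eq_div, le_div_iff₀ hj']
    calc ((n/j:ℕ):ℝ) * j = ((n/j*j : ℕ):ℝ) := by push_cast; ring
      _ ≤ n := by exact_mod_cast Nat.div_mul_le_self n j
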